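/- For all real x with 0 < x ≤ 2, (1+x)^{2/x + 0.82} ≤ e^2. -/

import Mathlib

open Real Set

lemma hasDeriv_aux (t : ℝ) (ht : -1 < t) :
    HasDerivAt (fun s : ℝ => s - s^2/2 + s^3/3 - s^4/4 + s^5/5 - Real.log (1+s))
      (1 - t + t^2 - t^3 + t^4 - 1/(1+t)) t := by
  have hlog : HasDerivAt (fun s : ℝ => Real.log (1+s)) (1/(1+t)) t := by
    have h1 : HasDerivAt (fun s : ℝ => 1 + s) 1 t := (hasDerivAt_id t).const_add 1
    simpa [Function.comp_def] using (Real.hasDerivAt_log (by linarith)).comp t h1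
  have hp : HasDerivAt (fun s : ℝ => s - s^2/2 + s^3/3 - s^4/4 + s^5/5)
      (1 - t + t^2 - t^3 + t^4) t := by
    have h1 := hasDerivAt_id t
    have h2 := (hasDerivAt_pow 2 t).div_const 2
    have h3 := (hasDerivAt_pow 3 t).div_const 3
    have h4 := (hasDerivAt_pow 4 t).div_const 4
    have h5 := (hasDerivAt_pow 5 t).div_const 5
    refine (((h1.sub h2).add h3).sub h4).add h5 |>.congr_deriv ?_
    push_cast
    ring
  exact hp.sub hlog

lemma log_le_quintic {u : ℝ} (hu : -1 < u) :
    Real.log (1+u) ≤ u - u^2/2 + u^3/3 - u^4/4 + u^5/5 := by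
  set f : ℝ → ℝ := fun s => s - s^2/2 + s^3/3 - s^4/4 + s^5/5 - Real.log (1+s) with hf
  have hf0 : f 0 = 0 := by simp [hf]
  have key : 0 ≤ f u := by
    rcases le_or_gt 0 u with h | h
    · have hm : MonotoneOn f (Ici 0) := by
        apply monotoneOn_of_deriv_nonneg (convex_Ici 0)
        · exact ContinuousOn.sub (by fun_prop) (ContinuousOn.log (by fun_prop)
            (fun s hs => by simp only [mem_Ici] at hs; positivity))
        · intro s hs
          rw [interior_Ici] at hs
          exact ((hasDeriv_aux s (by simp at hs; linarith)).differentiableAt).differentiableWithinAt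
        · intro s hs
          rw [interior_Ici, mem_Ioi] at hs
          rw [(hasDeriv_aux s (by linarith)).deriv]
          have h1s : 0 < 1 + s := by linarith
          have : 1 - s + s^2 - s^3 + s^4 - 1/(1+s) = s^5/(1+s) := by
            field_simp; ring
          rw [this]
          positivity
      have := hm (self_mem_Ici) (mem_Ici.2 h) h
      rwa [hf0] at this
    · have hm : AntitoneOn f (Ioc (-1) 0) := by
        apply antitoneOn_of_deriv_nonpos (convex_Ioc (-1) 0)
        · exact ContinuousOn.sub (by fun_prop) (ContinuousOn.log (by fun_prop)
            (fun s hs => by simp only [mem_Ioc] at hs; nlinarith [hs.1]))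
        · intro s hs
          rw [interior_Ioc] at hs
          exact ((hasDeriv_aux s hs.1).differentiableAt).differentiableWithinAt
        · intro s hs
          rw [interior_Ioc, mem_Ioo] at hs
          rw [(hasDeriv_aux s hs.1).deriv]
          have h1s : 0 < 1 + s := by linarith [hs.1]
          have : 1 - s + s^2 - s^3 + s^4 - 1/(1+s) = s^5/(1+s) := by
            field_simp; ring
          rw [this]
          apply div_nonpos_of_nonpos_of_nonneg _ h1s.le
          have : s^5 = s * (s^2)^2 := by ring
          rw [this]
          exact mul_nonpos_of_nonpos_of_nonneg hs.2.le (sq_nonneg _)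
      have := hm (mem_Ioc.2 ⟨hu, h.le⟩) (mem_Ioc.2 ⟨by norm_num, le_refl 0⟩) h.le
      rwa [hf0] at this
  rw [← sub_nonneg]
  exact key

lemma hasDeriv_aux2 (t : ℝ) (ht : -1 < t) :
    HasDerivAt (fun s : ℝ => Real.log (1+s) - (s - s^2/2 + s^3/3 - s^4/4 + s^5/5 - s^6/6))
      (1/(1+t) - (1 - t + t^2 - t^3 + t^4 - t^5)) t := by
  have hlog : HasDerivAt (fun s : ℝ => Real.log (1+s)) (1/(1+t)) t := by
    have h1 : HasDerivAt (fun s : ℝ => 1 + s) 1 t := (hasDerivAt_id t).const_add 1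
    simpa [Function.comp_def] using (Real.hasDerivAt_log (by linarith)).comp t h1
  have hp : HasDerivAt (fun s : ℝ => s - s^2/2 + s^3/3 - s^4/4 + s^5/5 - s^6/6)
      (1 - t + t^2 - t^3 + t^4 - t^5) t := by
    have h1 := hasDerivAt_id t
    have h2 := (hasDerivAt_pow 2 t).div_const 2
    have h3 := (hasDerivAt_pow 3 t).div_const 3
    have h4 := (hasDerivAt_pow 4 t).div_const 4
    have h5 := (hasDerivAt_pow 5 t).div_const 5
    have h6 := (hasDerivAt_pow 6 t).div_const 6
    refine ((((h1.sub h2).add h3).sub h4).add h5).sub h6 |>.congr_deriv ?_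
    push_cast
    ring
  exact hlog.sub hp

lemma sextic_le_log {u : ℝ} (hu : 0 ≤ u) :
    u - u^2/2 + u^3/3 - u^4/4 + u^5/5 - u^6/6 ≤ Real.log (1+u) := by
  set g : ℝ → ℝ := fun s => Real.log (1+s) - (s - s^2/2 + s^3/3 - s^4/4 + s^5/5 - s^6/6) with hg
  have hg0 : g 0 = 0 := by simp [hg]
  have hm : MonotoneOn g (Ici 0) := by
    apply monotoneOn_of_deriv_nonneg (convex_Ici 0)
    · exact ContinuousOn.sub (ContinuousOn.log (by fun_prop)
        (fun s hs => by simp only [mem_Ici] at hs; positivity)) (by fun_prop)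
    · intro s hs
      rw [interior_Ici, mem_Ioi] at hs
      exact ((hasDeriv_aux2 s (by linarith)).differentiableAt).differentiableWithinAt
    · intro s hs
      rw [interior_Ici, mem_Ioi] at hs
      rw [(hasDeriv_aux2 s (by linarith)).deriv]
      have h1s : 0 < 1 + s := by linarith
      have : 1/(1+s) - (1 - s + s^2 - s^3 + s^4 - s^5) = s^6/(1+s) := by
        field_simp; ring
      rw [this]
      positivity
  have := hm self_mem_Ici (mem_Ici.2 hu) hu
  rw [hg0] at this
  rw [← sub_nonneg]
  exact this

lemma log_three_lt : Real.log 3 < 1.09867 := by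
  have h1 : Real.log 3 = 2 * Real.log 2 - Real.log (4/3) := by
    rw [show (4:ℝ)/3 = 4/3 from rfl, Real.log_div (by norm_num) (by norm_num),
      show (4:ℝ) = 2^2 by norm_num, Real.log_pow]
    push_cast
    ring
  have h2 : Real.log 2 < 0.6931471808 := Real.log_two_lt_d9
  have h3 : ((1:ℝ)/3) - (1/3)^2/2 + (1/3)^3/3 - (1/3)^4/4 + (1/3)^5/5 - (1/3)^6/6
      ≤ Real.log (1 + 1/3) := sextic_le_log (by norm_num)
  rw [show (1:ℝ) + 1/3 = 4/3 by norm_num] at h3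
  rw [h1]
  norm_num at h3 ⊢
  linarith

theorem fact_one (x : ℝ) (hx0 : 0 < x) (hx2 : x ≤ 2) :
    (1 + x) ^ (2 / x + 0.82) ≤ Real.exp 1 ^ 2 := by
  have h1x : (0:ℝ) < 1 + x := by linarith
  have hexp : Real.exp 1 ^ 2 = Real.exp 2 := by
    rw [← Real.exp_nat_mul]; norm_num
  rw [hexp, Real.rpow_def_of_pos h1x, Real.exp_le_exp]
  have key : (2 + 0.82*x) * Real.log (1+x) ≤ 2*x := by
    rcases le_or_gt x 0.45 with h | h
    · have hl : Real.log (1+x) ≤ x - x^2/2 + x^3/3 - x^4/4 + x^5/5 :=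
        log_le_quintic (by linarith)
      have hpos : (0:ℝ) < 2 + 0.82*x := by nlinarith
      have h2 := mul_le_mul_of_nonneg_left hl hpos.le
      have h3 : (2 + 0.82*x) * (x - x^2/2 + x^3/3 - x^4/4 + x^5/5) ≤ 2*x := by
        nlinarith [sq_nonneg x, sq_nonneg (x^2), pow_pos hx0 3, pow_pos hx0 4,
          sq_nonneg (x-0.45), mul_pos hx0 hx0]
      linarith
    · have hu : -1 < (x-2)/3 := by linarith
      have heq : Real.log (1+x) = Real.log 3 + Real.log (1 + (x-2)/3) := by
        rw [← Real.log_mul (by norm_num) (by intro hc; nlinarith [hc])]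
        ring_nf
      have hl : Real.log (1 + (x-2)/3)
          ≤ (x-2)/3 - ((x-2)/3)^2/2 + ((x-2)/3)^3/3 - ((x-2)/3)^4/4 + ((x-2)/3)^5/5 :=
        log_le_quintic hu
      have hpos : (0:ℝ) < 2 + 0.82*x := by nlinarith
      have hlog3 : Real.log 3 < 1.09867 := log_three_lt
      have h2 : Real.log (1+x) ≤ 1.09867 + ((x-2)/3 - ((x-2)/3)^2/2 + ((x-2)/3)^3/3
          - ((x-2)/3)^4/4 + ((x-2)/3)^5/5) := by
        rw [heq]; linarith
      have h3 := mul_le_mul_of_nonneg_left h2 hpos.le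
      have h4 : (2 + 0.82*x) * (1.09867 + ((x-2)/3 - ((x-2)/3)^2/2 + ((x-2)/3)^3/3
          - ((x-2)/3)^4/4 + ((x-2)/3)^5/5)) ≤ 2*x := by
        nlinarith [sq_nonneg (x-2), sq_nonneg ((x-2)^2),
          mul_nonneg (sub_nonneg.2 h.le) (sub_nonneg.2 hx2),
          sq_nonneg ((x-2)*(x-0.45)), sq_nonneg (x-0.45)]
      linarith
  have hrw : Real.log (1+x) * (2/x + 0.82) = ((2 + 0.82*x) * Real.log (1+x))/x := by
    field_simp
  rw [hrw, div_le_iff₀ hx0]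
  linarith
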